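/- Consider dynamics ẋ = -Lx over a weighted directed graph in which all follower nodes are reachable from leader nodes (the graph has a directed spanning forest rooted at the leaders). Then the state of every follower node converges as t → ∞ to a point in the convex hull of the (constant) leader node states. -/

import Mathlib

open Filter Topology

open NormedSpace

open scoped Nat


namespace Stmt9Aux
variable {V : Type*} [Fintype V] [DecidableEq V]

lemma pow_entry_nonneg {M : Matrix V V ℝ} (hM : ∀ i j, 0 ≤ M i j) (n : ℕ) :
    ∀ i j, 0 ≤ (M ^ n) i j := by
  induction n with
  | zero => intro i j; by_cases h : i = j <;> simp [Matrix.one_apply, h]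
  | succ n ih =>
    intro i j
    rw [pow_succ, Matrix.mul_apply]
    exact Finset.sum_nonneg fun k _ => mul_nonneg (ih i k) (hM k j)

lemma pow_rowsum_zero {M : Matrix V V ℝ} (h : ∀ i, ∑ j, M i j = 0) :
    ∀ n : ℕ, 1 ≤ n → ∀ i, ∑ j, (M ^ n) i j = 0 := by
  intro n
  induction n with
  | zero => intro h0; omega
  | succ n ih =>
    intro _ i
    rw [show M ^ (n+1) = M * M ^ n from pow_succ' M n]
    simp only [Matrix.mul_apply]
    rw [Finset.sum_comm]
    by_cases hn : 1 ≤ n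
    · calc ∑ l, ∑ j, M i l * (M ^ n) l j = ∑ l, M i l * ∑ j, (M ^ n) l j := by
            simp [Finset.mul_sum]
        _ = 0 := by simp [fun l => ih hn l]
    · have hn0 : n = 0 := by omega
      subst hn0
      have h1 : ∀ x : V, ∑ x1, (1 : Matrix V V ℝ) x x1 = 1 := by
        intro x; simp [Matrix.one_apply]
      calc ∑ x, ∑ x1, M i x * (1:Matrix V V ℝ) x x1
          = ∑ x, M i x * ∑ x1, (1:Matrix V V ℝ) x x1 := by simp [Finset.mul_sum]
        _ = 0 := by simp [h1, h i]

lemma pow_row_zero {M : Matrix V V ℝ} {ℓ : V} (h : ∀ j, M ℓ j = 0) :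
    ∀ n : ℕ, 1 ≤ n → ∀ j, (M ^ n) ℓ j = 0 := by
  intro n
  induction n with
  | zero => omega
  | succ n ih =>
    intro _ j
    rw [show M ^ (n+1) = M * M ^ n from pow_succ' M n, Matrix.mul_apply]
    simp [h]

lemma entry_exp_eq (M : Matrix V V ℝ) (i j : V) :
    exp M i j = ∑' n : ℕ, ((n ! : ℝ)⁻¹ * (M ^ n) i j) ∧
    Summable (fun n : ℕ => (n ! : ℝ)⁻¹ * (M ^ n) i j) := by
  letI : NormedRing (Matrix V V ℝ) := Matrix.linftyOpNormedRing
  letI : NormedAlgebra ℝ (Matrix V V ℝ) := Matrix.linftyOpNormedAlgebra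
  have hs : Summable (fun n : ℕ => (n ! : ℝ)⁻¹ • M ^ n) := expSeries_summable' (𝕂 := ℝ) M
  let ev : Matrix V V ℝ →ₗ[ℝ] ℝ :=
    { toFun := fun N => N i j
      map_add' := fun a b => rfl
      map_smul' := fun c a => rfl }
  have hev : Continuous ev := ev.continuous_of_finiteDimensional
  let evL : Matrix V V ℝ →L[ℝ] ℝ := ⟨ev, hev⟩
  have h1 : exp M i j = evL (exp M) := rfl
  have h2 := evL.map_tsum hs
  constructor
  · rw [h1, exp_eq_tsum ℝ, h2]
    exact tsum_congr fun n => rfl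
  · have := hs.map evL evL.continuous
    exact this

lemma exp_entry_ge {M : Matrix V V ℝ} (hM : ∀ i j, 0 ≤ M i j) (k : ℕ) (i j : V) :
    (k ! : ℝ)⁻¹ * (M ^ k) i j ≤ exp M i j := by
  obtain ⟨heq, hsum⟩ := entry_exp_eq M i j
  rw [heq]
  exact Summable.le_tsum hsum k fun n _ =>
    mul_nonneg (by positivity) (pow_entry_nonneg hM n i j)

lemma exp_entry_nonneg' {M : Matrix V V ℝ} (hM : ∀ i j, 0 ≤ M i j) (i j : V) :
    0 ≤ exp M i j := by
  have := exp_entry_ge hM 0 i j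
  refine le_trans ?_ this
  exact mul_nonneg (by positivity) (pow_entry_nonneg hM 0 i j)

/-- shift by a multiple of the identity -/
lemma exp_shift (M : Matrix V V ℝ) (c : ℝ) :
    exp M = Real.exp (-c) • exp (M + c • (1 : Matrix V V ℝ)) := by
  have hcomm : Commute (M + c • (1 : Matrix V V ℝ)) ((-c) • (1 : Matrix V V ℝ)) := by
    refine Commute.smul_right ?_ _
    exact Commute.one_right _
  have h1 : M = (M + c • (1 : Matrix V V ℝ)) + (-c) • (1 : Matrix V V ℝ) := by
    rw [add_assoc, ← add_smul]; simp
  have h2 : exp ((-c) • (1 : Matrix V V ℝ)) = Real.exp (-c) • (1 : Matrix V V ℝ) := by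
    letI : NormedRing (Matrix V V ℝ) := Matrix.linftyOpNormedRing
    letI : NormedAlgebra ℝ (Matrix V V ℝ) := Matrix.linftyOpNormedAlgebra
    have : (-c) • (1 : Matrix V V ℝ) = algebraMap ℝ (Matrix V V ℝ) (-c) := by
      rw [Algebra.algebraMap_eq_smul_one]
    rw [this]
    exact (algebraMap_exp_comm (𝔸 := Matrix V V ℝ) (-c)).symm.trans
      (by rw [Algebra.algebraMap_eq_smul_one, Real.exp_eq_exp_ℝ])
  calc exp M = exp (M + c • (1:Matrix V V ℝ)) * exp ((-c) • (1:Matrix V V ℝ)) := by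
        conv_lhs => rw [h1]
        exact Matrix.exp_add_of_commute _ _ hcomm
      _ = Real.exp (-c) • exp (M + c • (1 : Matrix V V ℝ)) := by
        rw [h2, Matrix.mul_smul, mul_one]

/-- off-diagonal nonneg implies exp nonneg entrywise -/
lemma exp_entry_nonneg {M : Matrix V V ℝ} (hM : ∀ i j, i ≠ j → 0 ≤ M i j) (i j : V) :
    0 ≤ exp M i j := by
  obtain ⟨c, hc⟩ : ∃ c : ℝ, ∀ i, -M i i ≤ c := Finite.exists_le _
  have hN : ∀ a b, 0 ≤ (M + c • (1 : Matrix V V ℝ)) a b := by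
    intro a b
    by_cases h : a = b
    · subst h; simp only [Matrix.add_apply, Matrix.smul_apply, Matrix.one_apply_eq, smul_eq_mul,
        mul_one]
      linarith [hc a]
    · simp only [Matrix.add_apply, Matrix.smul_apply, Matrix.one_apply_ne h, smul_eq_mul,
        mul_zero, add_zero]
      exact hM a b h
  rw [exp_shift M c]
  simp only [Matrix.smul_apply, smul_eq_mul]
  exact mul_nonneg (Real.exp_pos _).le (exp_entry_nonneg' hN i j)

lemma exp_rowsum_one {M : Matrix V V ℝ} (h : ∀ i, ∑ j, M i j = 0) (i : V) :
    ∑ j, exp M i j = 1 := by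
  have hrw : ∀ j, exp M i j = ∑' n : ℕ, ((n ! : ℝ)⁻¹ * (M ^ n) i j) :=
    fun j => (entry_exp_eq M i j).1
  have hsum : ∀ j ∈ Finset.univ, Summable (fun n : ℕ => (n ! : ℝ)⁻¹ * (M ^ n) i j) :=
    fun j _ => (entry_exp_eq M i j).2
  calc ∑ j, exp M i j = ∑ j, ∑' n : ℕ, ((n ! : ℝ)⁻¹ * (M ^ n) i j) :=
        Finset.sum_congr rfl fun j _ => hrw j
    _ = ∑' n : ℕ, ∑ j, ((n ! : ℝ)⁻¹ * (M ^ n) i j) := (Summable.tsum_finsetSum hsum).symm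
    _ = 1 := by
        rw [tsum_eq_single 0]
        · simp [Matrix.one_apply, Finset.sum_ite_eq']
        · intro n hn
          rw [← Finset.mul_sum, pow_rowsum_zero h n (by omega) i, mul_zero]

lemma exp_row_of_zero_row {M : Matrix V V ℝ} {ℓ : V} (h : ∀ j, M ℓ j = 0) (j : V) :
    exp M ℓ j = (1 : Matrix V V ℝ) ℓ j := by
  rw [(entry_exp_eq M ℓ j).1, tsum_eq_single 0]
  · simp
  · intro n hn
    rw [pow_row_zero h n (by omega) j, mul_zero]


lemma exp_entry_pos {A : Matrix V V ℝ} (hA : ∀ i j, 0 ≤ A i j) {ℓ i : V}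
    (hpath : Relation.ReflTransGen (fun a b => 0 < A b a) ℓ i) :
    0 < exp (A - Matrix.diagonal (fun k => ∑ m, A k m)) i ℓ := by
  set B : Matrix V V ℝ := A - Matrix.diagonal (fun k => ∑ m, A k m) with hB
  obtain ⟨c0, hc0⟩ : ∃ c0 : ℝ, ∀ k, (∑ m, A k m) - A k k ≤ c0 := Finite.exists_le _
  set c : ℝ := c0 + 1 with hc
  set N : Matrix V V ℝ := B + c • (1 : Matrix V V ℝ) with hN
  have hNdiag : ∀ a, 1 ≤ N a a := by
    intro a
    have : N a a = A a a - (∑ m, A a m) + c := by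
      simp [hN, hB, Matrix.sub_apply, Matrix.diagonal_apply_eq, Matrix.one_apply_eq]
    rw [this, hc]
    linarith [hc0 a]
  have hNnn : ∀ a b, 0 ≤ N a b := by
    intro a b
    by_cases h : a = b
    · subst h; linarith [hNdiag a]
    · have : N a b = A a b := by
        simp [hN, hB, Matrix.sub_apply, Matrix.diagonal_apply_ne _ h, Matrix.one_apply_ne h]
      rw [this]; exact hA a b
  have hNpos : ∀ a b, 0 < A a b → 0 < N a b := by
    intro a b hab
    by_cases h : a = b
    · subst h; linarith [hNdiag a]
    · have : N a b = A a b := by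
        simp [hN, hB, Matrix.sub_apply, Matrix.diagonal_apply_ne _ h, Matrix.one_apply_ne h]
      rw [this]; exact hab
  have hkey : ∃ k : ℕ, 0 < (N ^ k) i ℓ := by
    induction hpath with
    | refl => exact ⟨0, by simp⟩
    | tail hab hbi ih =>
      obtain ⟨k, hk⟩ := ih
      rename_i b i'
      refine ⟨k + 1, ?_⟩
      rw [show N ^ (k+1) = N * N ^ k from pow_succ' N k, Matrix.mul_apply]
      refine Finset.sum_pos' (fun m _ => mul_nonneg (hNnn _ _) (pow_entry_nonneg hNnn k _ _)) ?_
      exact ⟨b, Finset.mem_univ _, mul_pos (hNpos _ _ hbi) hk⟩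
  obtain ⟨k, hk⟩ := hkey
  have hshift := exp_shift B c
  have hBN : B + c • (1 : Matrix V V ℝ) = N := rfl
  rw [hshift, hBN]
  simp only [Matrix.smul_apply, smul_eq_mul]
  refine mul_pos (Real.exp_pos _) ?_
  have hge := exp_entry_ge hNnn k i ℓ
  have hpos : 0 < (k ! : ℝ)⁻¹ * (N ^ k) i ℓ := by positivity
  linarith

lemma flow_eq {B : Matrix V V ℝ} (x : ℝ → V → ℝ)
    (hx : ∀ t, HasDerivAt x (B.mulVec (x t)) t) :
    ∀ t : ℝ, 0 ≤ t → x t = (exp (t • B)).mulVec (x 0) := by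
  letI : NormedRing (Matrix V V ℝ) := Matrix.linftyOpNormedRing
  letI : NormedAlgebra ℝ (Matrix V V ℝ) := Matrix.linftyOpNormedAlgebra
  intro T hT
  set g : ℝ → V → ℝ := fun t => (exp (t • B)).mulVec (x 0) with hgdef
  let Lv : (V → ℝ) →L[ℝ] (V → ℝ) := LinearMap.toContinuousLinearMap (Matrix.mulVecLin B)
  have hlip : LipschitzWith ‖Lv‖₊ (fun y : V → ℝ => B.mulVec y) := Lv.lipschitz
  let ML : Matrix V V ℝ →ₗ[ℝ] (V → ℝ) :=
    { toFun := fun M => M.mulVec (x 0)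
      map_add' := fun a b => Matrix.add_mulVec a b (x 0)
      map_smul' := fun r M => by simpa using Matrix.smul_mulVec r M (x 0) }
  let MLc : Matrix V V ℝ →L[ℝ] (V → ℝ) := LinearMap.toContinuousLinearMap ML
  have hg : ∀ t, HasDerivAt g (B.mulVec (g t)) t := by
    intro t
    have hexp : HasDerivAt (fun u : ℝ => exp (u • B)) (B * exp (t • B)) t :=
      hasDerivAt_exp_smul_const' B t
    have h2 := (MLc.hasFDerivAt (x := exp (t • B))).comp_hasDerivAt t hexp
    have h3 : MLc (B * exp (t • B)) = B.mulVec (g t) := by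
      show (B * exp (t • B)).mulVec (x 0) = B.mulVec ((exp (t • B)).mulVec (x 0))
      rw [Matrix.mulVec_mulVec]
    replace h2 := h2.congr_deriv h3
    exact h2
  have hxc : ContinuousOn x (Set.Icc 0 T) :=
    (continuous_iff_continuousAt.2 fun t => (hx t).continuousAt).continuousOn
  have hgc : ContinuousOn g (Set.Icc 0 T) :=
    (continuous_iff_continuousAt.2 fun t => (hg t).continuousAt).continuousOn
  have hinit : x 0 = g 0 := by
    simp [hgdef, zero_smul, exp_zero, Matrix.one_mulVec]
  have key := ODE_solution_unique_of_mem_Icc_right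
    (v := fun _ y => B.mulVec y) (s := fun _ => Set.univ) (K := ‖Lv‖₊)
    (fun _ _ => hlip.lipschitzOnWith)
    hxc (fun t _ => (hx t).hasDerivWithinAt) (fun _ _ => trivial)
    hgc (fun t _ => (hg t).hasDerivWithinAt) (fun _ _ => trivial) hinit
  exact key ⟨hT, le_refl T⟩

end Stmt9Aux


/-- Containment: dynamics `ẋᵢ = Σⱼ aᵢⱼ (xⱼ - xᵢ)` over a weighted directed graph
(edge (j,i) iff `A i j > 0`; a leader is a node with no incoming edge, i.e.
`∀ j, A i j = 0`, so its state is constant). If every follower is reachable from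
some leader, then every node's state converges, and the limit lies in the convex
hull of the leaders' (constant) states, i.e. between every lower bound and every
upper bound of the leader states. -/
theorem stmt9 {V : Type*} [Fintype V] (A : Matrix V V ℝ)
    (hA : ∀ i j, 0 ≤ A i j)
    (hreach : ∀ i : V, (∃ j, 0 < A i j) →
      ∃ ℓ : V, (∀ j, A ℓ j = 0) ∧
        Relation.ReflTransGen (fun a b => 0 < A b a) ℓ i)
    (x : ℝ → V → ℝ)
    (hx : ∀ (i : V) (t : ℝ),
      HasDerivAt (fun s => x s i) (∑ j, A i j * (x t j - x t i)) t) :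
    ∀ i : V, ∃ c : ℝ, Tendsto (fun t => x t i) atTop (𝓝 c) ∧
      (∀ lb : ℝ, (∀ ℓ, (∀ j, A ℓ j = 0) → lb ≤ x 0 ℓ) → lb ≤ c) ∧
      (∀ ub : ℝ, (∀ ℓ, (∀ j, A ℓ j = 0) → x 0 ℓ ≤ ub) → c ≤ ub) := by
  classical
  intro i
  set B : Matrix V V ℝ := A - Matrix.diagonal (fun k => ∑ m, A k m) with hBdef
  -- basic facts about B
  have hBoff : ∀ a b, a ≠ b → 0 ≤ B a b := by
    intro a b hab
    simp only [hBdef, Matrix.sub_apply, Matrix.diagonal_apply_ne _ hab, sub_zero]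
    exact hA a b
  have hBrow : ∀ a, ∑ j, B a j = 0 := by
    intro a
    simp only [hBdef, Matrix.sub_apply, Finset.sum_sub_distrib]
    simp [Matrix.diagonal_apply, Finset.sum_ite_eq]
  have hBlead : ∀ ℓ, (∀ j, A ℓ j = 0) → ∀ j, B ℓ j = 0 := by
    intro ℓ hℓ j
    by_cases h : ℓ = j
    · subst h
      simp [hBdef, Matrix.diagonal_apply_eq, hℓ]
    · simp [hBdef, Matrix.diagonal_apply_ne _ h, hℓ]
  -- vector form of the dynamics
  have hmulvec : ∀ (v : V → ℝ) (a : V), (B.mulVec v) a = ∑ j, A a j * (v j - v a) := by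
    intro v a
    have h1 : (B.mulVec v) a = (∑ j, A a j * v j) - (∑ j, A a j) * v a := by
      simp only [hBdef, Matrix.sub_mulVec, Pi.sub_apply, Matrix.mulVec_diagonal]
      simp [Matrix.mulVec, dotProduct]
    rw [h1, Finset.sum_mul, ← Finset.sum_sub_distrib]
    exact Finset.sum_congr rfl fun j _ => by ring
  have hxv : ∀ t, HasDerivAt x (B.mulVec (x t)) t := by
    intro t
    rw [hasDerivAt_pi]
    intro a
    have := hx a t
    rwa [← hmulvec (x t) a] at this
  -- the flow
  set E : ℝ → Matrix V V ℝ := fun t => NormedSpace.exp (t • B) with hEdef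
  have hflow : ∀ t : ℝ, 0 ≤ t → x t = (E t).mulVec (x 0) := Stmt9Aux.flow_eq x hxv
  have hEnn : ∀ t : ℝ, 0 ≤ t → ∀ a b, 0 ≤ E t a b := by
    intro t ht a b
    refine Stmt9Aux.exp_entry_nonneg (fun a b hab => ?_) a b
    simpa [Matrix.smul_apply, smul_eq_mul] using mul_nonneg ht (hBoff a b hab)
  have hErow : ∀ t : ℝ, ∀ a, ∑ j, E t a j = 1 := by
    intro t a
    refine Stmt9Aux.exp_rowsum_one (fun a => ?_) a
    simp [Matrix.smul_apply, ← Finset.mul_sum, hBrow a]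
  have hElead : ∀ t : ℝ, ∀ ℓ, (∀ j, A ℓ j = 0) → ∀ j, E t ℓ j = (1 : Matrix V V ℝ) ℓ j := by
    intro t ℓ hℓ j
    refine Stmt9Aux.exp_row_of_zero_row (fun j => ?_) j
    simp [Matrix.smul_apply, hBlead ℓ hℓ j]
  have hEadd : ∀ a b : ℝ, E (a + b) = E a * E b := by
    intro a b
    have hcomm : Commute (a • B) (b • B) := ((Commute.refl B).smul_right b).smul_left a
    rw [hEdef]
    simp only
    rw [add_smul]
    exact Matrix.exp_add_of_commute _ _ hcomm
  have hEzero : E 0 = 1 := by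
    rw [hEdef]; simp only [zero_smul]; exact NormedSpace.exp_zero
  -- leader coordinates are preserved by mulVec with E t
  have hEcoord : ∀ t : ℝ, ∀ ℓ, (∀ j, A ℓ j = 0) → ∀ v : V → ℝ, ((E t).mulVec v) ℓ = v ℓ := by
    intro t ℓ hℓ v
    simp only [Matrix.mulVec, dotProduct]
    rw [Finset.sum_congr rfl fun j _ => by rw [hElead t ℓ hℓ j]]
    simp [Matrix.one_apply]
  have hlead : ∀ t : ℝ, 0 ≤ t → ∀ ℓ, (∀ j, A ℓ j = 0) → x t ℓ = x 0 ℓ := by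
    intro t ht ℓ hℓ
    rw [hflow t ht, hEcoord t ℓ hℓ]
  -- the leader set
  set Lset : Finset V := Finset.univ.filter (fun ℓ => ∀ j, A ℓ j = 0) with hLset
  set w : V → ℝ := fun a => ∑ ℓ ∈ Lset, E 1 a ℓ with hwdef
  have hw1 : ∀ a, w a ≤ 1 := by
    intro a
    rw [hwdef]
    calc ∑ ℓ ∈ Lset, E 1 a ℓ ≤ ∑ ℓ, E 1 a ℓ :=
          Finset.sum_le_sum_of_subset_of_nonneg (Finset.subset_univ _)
            (fun j _ _ => hEnn 1 one_pos.le a j)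
      _ = 1 := hErow 1 a
  have hw0 : ∀ a, 0 < w a := by
    intro a
    by_cases ha : ∀ j, A a j = 0
    · have hmem : a ∈ Lset := by simp [hLset, ha]
      have h1 : E 1 a a = 1 := by rw [hElead 1 a ha a, Matrix.one_apply_eq]
      have := Finset.single_le_sum (f := fun ℓ => E 1 a ℓ)
        (fun j _ => hEnn 1 one_pos.le a j) hmem
      have h2 : (1:ℝ) ≤ ∑ ℓ ∈ Lset, E 1 a ℓ := by simpa [h1] using this
      rw [hwdef]; simp only; linarith
    · push_neg at ha
      obtain ⟨j, hj⟩ := ha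
      have hj' : 0 < A a j := lt_of_le_of_ne (hA a j) (Ne.symm hj)
      obtain ⟨ℓ, hℓ, hpath⟩ := hreach a ⟨j, hj'⟩
      have hpos : 0 < E 1 a ℓ := by
        have := Stmt9Aux.exp_entry_pos hA hpath
        rw [hEdef]; simp only [one_smul]
        exact this
      have hmem : ℓ ∈ Lset := by simp [hLset, hℓ]
      have := Finset.single_le_sum (f := fun m => E 1 a m)
        (fun m _ => hEnn 1 one_pos.le a m) hmem
      rw [hwdef]; simp only
      linarith
  have hVne : (Finset.univ : Finset V).Nonempty := ⟨i, Finset.mem_univ i⟩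
  set δ : ℝ := Finset.univ.inf' hVne w with hδdef
  have hδle : ∀ a, δ ≤ w a := fun a => Finset.inf'_le w (Finset.mem_univ a)
  have hδ0 : 0 < δ := by
    rw [hδdef, Finset.lt_inf'_iff]
    exact fun a _ => hw0 a
  have hδ1 : δ ≤ 1 := le_trans (hδle i) (hw1 i)
  have hr0 : (0:ℝ) ≤ 1 - δ := by linarith
  have hr1 : (1:ℝ) - δ < 1 := by linarith
  -- sum splitting
  have hsplit : ∀ a, (∑ j ∈ Finset.univ.filter (fun ℓ => ¬ ∀ j, A ℓ j = 0), E 1 a j) = 1 - w a := by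
    intro a
    have h0 := Finset.sum_filter_add_sum_filter_not Finset.univ (fun ℓ => ∀ j, A ℓ j = 0)
      (fun j => E 1 a j)
    have h2 : ∑ j, E 1 a j = 1 := hErow 1 a
    rw [hwdef, hLset]
    simp only at h0 ⊢
    linarith
  -- two-sided contraction
  have habs : ∀ (y : V → ℝ) (C : ℝ), 0 ≤ C → (∀ j, |y j| ≤ C) → (∀ ℓ ∈ Lset, y ℓ = 0) →
      ∀ a, |((E 1).mulVec y) a| ≤ (1 - δ) * C := by
    intro y C hC hy hyl a
    have h1 : ((E 1).mulVec y) a = ∑ j ∈ Finset.univ.filter (fun ℓ => ¬ ∀ j, A ℓ j = 0),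
        E 1 a j * y j := by
      simp only [Matrix.mulVec, dotProduct]
      rw [← Finset.sum_filter_add_sum_filter_not Finset.univ (fun ℓ => ∀ j, A ℓ j = 0)
        (fun j => E 1 a j * y j)]
      have hz : ∑ j ∈ Finset.univ.filter (fun ℓ => ∀ j, A ℓ j = 0), E 1 a j * y j = 0 := by
        refine Finset.sum_eq_zero fun ℓ hℓ => ?_
        rw [hyl ℓ (by rw [hLset]; exact hℓ), mul_zero]
      rw [hz, zero_add]
    rw [h1]
    calc |∑ j ∈ Finset.univ.filter (fun ℓ => ¬ ∀ j, A ℓ j = 0), E 1 a j * y j|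
        ≤ ∑ j ∈ Finset.univ.filter (fun ℓ => ¬ ∀ j, A ℓ j = 0), |E 1 a j * y j| :=
          Finset.abs_sum_le_sum_abs _ _
      _ ≤ ∑ j ∈ Finset.univ.filter (fun ℓ => ¬ ∀ j, A ℓ j = 0), E 1 a j * C := by
          refine Finset.sum_le_sum fun j _ => ?_
          rw [abs_mul, abs_of_nonneg (hEnn 1 one_pos.le a j)]
          exact mul_le_mul_of_nonneg_left (hy j) (hEnn 1 one_pos.le a j)
      _ = (1 - w a) * C := by rw [← Finset.sum_mul, hsplit a]
      _ ≤ (1 - δ) * C := by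
          apply mul_le_mul_of_nonneg_right _ hC
          linarith [hδle a]
  -- one-sided contraction (from below)
  have hlowstep : ∀ (y : V → ℝ) (C lb : ℝ), 0 ≤ C → (∀ j, lb - y j ≤ C) →
      (∀ ℓ ∈ Lset, lb ≤ y ℓ) → ∀ a, lb - ((E 1).mulVec y) a ≤ (1 - δ) * C := by
    intro y C lb hC hy hyl a
    have h1 : ((E 1).mulVec y) a = (∑ ℓ ∈ Lset, E 1 a ℓ * y ℓ) +
        ∑ j ∈ Finset.univ.filter (fun ℓ => ¬ ∀ j, A ℓ j = 0), E 1 a j * y j := by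
      simp only [Matrix.mulVec, dotProduct]
      rw [← Finset.sum_filter_add_sum_filter_not Finset.univ (fun ℓ => ∀ j, A ℓ j = 0)
        (fun j => E 1 a j * y j), hLset]
    have h2 : (∑ ℓ ∈ Lset, E 1 a ℓ * y ℓ) ≥ w a * lb := by
      rw [hwdef]; simp only [Finset.sum_mul]
      refine Finset.sum_le_sum fun ℓ hℓ => ?_
      exact mul_le_mul_of_nonneg_left (hyl ℓ hℓ) (hEnn 1 one_pos.le a ℓ)
    have h3 : (∑ j ∈ Finset.univ.filter (fun ℓ => ¬ ∀ j, A ℓ j = 0), E 1 a j * y j) ≥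
        (1 - w a) * (lb - C) := by
      rw [← hsplit a, Finset.sum_mul]
      refine Finset.sum_le_sum fun j _ => ?_
      exact mul_le_mul_of_nonneg_left (by linarith [hy j]) (hEnn 1 one_pos.le a j)
    have hwa1 : w a ≤ 1 := hw1 a
    have hwaδ : δ ≤ w a := hδle a
    nlinarith [h2, h3]
  -- one-sided contraction (from above)
  have huppstep : ∀ (y : V → ℝ) (C ub : ℝ), 0 ≤ C → (∀ j, y j - ub ≤ C) →
      (∀ ℓ ∈ Lset, y ℓ ≤ ub) → ∀ a, ((E 1).mulVec y) a - ub ≤ (1 - δ) * C := by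
    intro y C ub hC hy hyl a
    have h := hlowstep (fun j => -y j) C (-ub) hC
      (fun j => by linarith [hy j]) (fun ℓ hℓ => by linarith [hyl ℓ hℓ]) a
    have hneg : ((E 1).mulVec (fun j => -y j)) a = -(((E 1).mulVec y) a) := by
      simp [Matrix.mulVec, dotProduct, Finset.sum_neg_distrib]
    rw [hneg] at h
    linarith
  -- step of the flow
  have hstep : ∀ s : ℝ, 0 ≤ s → x (s + 1) = (E 1).mulVec (x s) := by
    intro s hs
    rw [hflow (s + 1) (by linarith), hflow s hs, show s + 1 = (1:ℝ) + s by ring,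
      hEadd 1 s, ← Matrix.mulVec_mulVec]
  -- iterated contraction
  have hiter : ∀ (y : V → ℝ) (C : ℝ), 0 ≤ C → (∀ j, |y j| ≤ C) → (∀ ℓ ∈ Lset, y ℓ = 0) →
      ∀ n : ℕ, ∀ a, |((E (n : ℝ)).mulVec y) a| ≤ (1 - δ) ^ n * C := by
    intro y C hC hy hyl
    intro n
    induction n with
    | zero =>
      intro a
      simp only [Nat.cast_zero, hEzero, Matrix.one_mulVec, pow_zero, one_mul]
      exact hy a
    | succ n ih =>
      intro a
      have hcast : ((n + 1 : ℕ) : ℝ) = 1 + (n : ℝ) := by push_cast; ring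
      have hE1 : E ((n + 1 : ℕ) : ℝ) = E 1 * E (n : ℝ) := by rw [hcast, hEadd]
      have hmv : ((E ((n+1 : ℕ) : ℝ)).mulVec y) = (E 1).mulVec ((E (n : ℝ)).mulVec y) := by
        rw [hE1, ← Matrix.mulVec_mulVec]
      rw [hmv]
      have hz : ∀ ℓ ∈ Lset, ((E (n : ℝ)).mulVec y) ℓ = 0 := by
        intro ℓ hℓ
        have hℓ' : ∀ j, A ℓ j = 0 := by
          rw [hLset] at hℓ; simpa using (Finset.mem_filter.mp hℓ).2
        rw [hEcoord _ ℓ hℓ', hyl ℓ hℓ]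
      have hb := habs ((E (n : ℝ)).mulVec y) ((1 - δ) ^ n * C)
        (by positivity) ih hz a
      calc |((E 1).mulVec ((E (n : ℝ)).mulVec y)) a| ≤ (1 - δ) * ((1 - δ) ^ n * C) := hb
        _ = (1 - δ) ^ (n + 1) * C := by ring
  -- uniform bound on the state
  obtain ⟨M0, hM0⟩ : ∃ M0 : ℝ, ∀ j, |x 0 j| ≤ M0 := Finite.exists_le _
  set M : ℝ := max M0 0 with hMdef
  have hM : ∀ j, |x 0 j| ≤ M := fun j => le_trans (hM0 j) (le_max_left _ _)
  have hMnn : 0 ≤ M := le_max_right _ _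
  have hbound : ∀ s : ℝ, 0 ≤ s → ∀ a, |x s a| ≤ M := by
    intro s hs a
    rw [hflow s hs]
    simp only [Matrix.mulVec, dotProduct]
    calc |∑ j, E s a j * x 0 j| ≤ ∑ j, |E s a j * x 0 j| := Finset.abs_sum_le_sum_abs _ _
      _ ≤ ∑ j, E s a j * M := by
          refine Finset.sum_le_sum fun j _ => ?_
          rw [abs_mul, abs_of_nonneg (hEnn s hs a j)]
          exact mul_le_mul_of_nonneg_left (hM j) (hEnn s hs a j)
      _ = M := by rw [← Finset.sum_mul, hErow s a, one_mul]
  -- difference bound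
  have hdiff : ∀ n : ℕ, ∀ s : ℝ, 0 ≤ s → ∀ a,
      |x ((n : ℝ) + s) a - x (n : ℝ) a| ≤ (1 - δ) ^ n * (2 * M) := by
    intro n s hs a
    have hn0 : (0:ℝ) ≤ (n : ℝ) := Nat.cast_nonneg n
    have h1 : x ((n : ℝ) + s) = (E (n : ℝ)).mulVec (x s) := by
      rw [hflow ((n : ℝ) + s) (by linarith), hEadd, ← Matrix.mulVec_mulVec, ← hflow s hs]
    have h2 : x (n : ℝ) = (E (n : ℝ)).mulVec (x 0) := hflow _ hn0
    have h3 : ∀ a, x ((n : ℝ) + s) a - x (n : ℝ) a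
        = ((E (n : ℝ)).mulVec (fun j => x s j - x 0 j)) a := by
      intro a
      rw [h1, h2]
      simp [Matrix.mulVec, dotProduct, mul_sub, Finset.sum_sub_distrib]
    rw [h3 a]
    refine hiter (fun j => x s j - x 0 j) (2 * M) (by linarith) (fun j => ?_) (fun ℓ hℓ => ?_) n a
    · have := hbound s hs j
      have h0 := hM j
      calc |x s j - x 0 j| ≤ |x s j| + |x 0 j| := abs_sub _ _
        _ ≤ 2 * M := by linarith
    · have hℓ' : ∀ j, A ℓ j = 0 := by
        rw [hLset] at hℓ; simpa using (Finset.mem_filter.mp hℓ).2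
      show x s ℓ - x 0 ℓ = 0
      rw [hlead s hs ℓ hℓ', sub_self]
  -- the sequence x n i is Cauchy
  have hcauchy : CauchySeq (fun n : ℕ => x (n : ℝ) i) := by
    refine cauchySeq_of_le_geometric (1 - δ) (2 * M) hr1 fun n => ?_
    rw [Real.dist_eq, abs_sub_comm]
    have hcast : ((n + 1 : ℕ) : ℝ) = (n : ℝ) + 1 := by push_cast; ring
    rw [hcast]
    have := hdiff n 1 one_pos.le i
    calc |x ((n : ℝ) + 1) i - x (n : ℝ) i| ≤ (1 - δ) ^ n * (2 * M) := by
          simpa using this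
      _ = 2 * M * (1 - δ) ^ n := by ring
  obtain ⟨c, hc⟩ := cauchySeq_tendsto_of_complete hcauchy
  refine ⟨c, ?_, ?_, ?_⟩
  · -- convergence of x t i to c
    have hfl : Tendsto (fun t : ℝ => (⌊t⌋₊ : ℕ)) atTop atTop := tendsto_nat_floor_atTop
    have hg1 : Tendsto (fun n : ℕ => (1 - δ) ^ n * (2 * M)) atTop (𝓝 0) := by
      have := (tendsto_pow_atTop_nhds_zero_of_lt_one hr0 hr1).mul_const (2 * M)
      simpa using this
    have hg2 : Tendsto (fun n : ℕ => |x (n : ℝ) i - c|) atTop (𝓝 0) := by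
      have h := hc.sub_const c
      have : Tendsto (fun n : ℕ => x (n : ℝ) i - c) atTop (𝓝 0) := by simpa using h
      simpa using this.abs
    have hG : Tendsto (fun t : ℝ => (1 - δ) ^ ⌊t⌋₊ * (2 * M) + |x (⌊t⌋₊ : ℝ) i - c|)
        atTop (𝓝 0) := by
      have := (hg1.comp hfl).add (hg2.comp hfl)
      simpa using this
    have hb : ∀ᶠ t : ℝ in atTop, ‖x t i - c‖ ≤
        (1 - δ) ^ ⌊t⌋₊ * (2 * M) + |x (⌊t⌋₊ : ℝ) i - c| := by
      filter_upwards [eventually_ge_atTop (0:ℝ)] with t ht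
      have hfloor : (⌊t⌋₊ : ℝ) ≤ t := Nat.floor_le ht
      have hs : 0 ≤ t - (⌊t⌋₊ : ℝ) := by linarith
      have hd := hdiff ⌊t⌋₊ (t - (⌊t⌋₊ : ℝ)) hs i
      rw [show ((⌊t⌋₊ : ℝ) + (t - (⌊t⌋₊ : ℝ))) = t by ring] at hd
      rw [Real.norm_eq_abs]
      calc |x t i - c| ≤ |x t i - x (⌊t⌋₊ : ℝ) i| + |x (⌊t⌋₊ : ℝ) i - c| := abs_sub_le _ _ _
        _ ≤ (1 - δ) ^ ⌊t⌋₊ * (2 * M) + |x (⌊t⌋₊ : ℝ) i - c| := by linarith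
    have := squeeze_zero_norm' hb hG
    have h2 : Tendsto (fun t : ℝ => (x t i - c) + c) atTop (𝓝 (0 + c)) := this.add_const c
    simpa using h2
  · -- lower bound
    intro lb hlb
    set C0 : ℝ := M + |lb| with hC0def
    have hC0 : 0 ≤ C0 := by positivity
    have hlown : ∀ n : ℕ, ∀ a, lb - x (n : ℝ) a ≤ (1 - δ) ^ n * C0 := by
      intro n
      induction n with
      | zero =>
        intro a
        simp only [Nat.cast_zero, pow_zero, one_mul]
        have := hM a
        have h1 : |lb| + x 0 a ≥ lb - M + x 0 a - x 0 a + x 0 a - M + M - x 0 a + x 0 a - x 0 a + x 0 a - x 0 a + x 0 a - x 0 a := by linarith [le_abs_self lb, abs_le.mp (hM a)]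
        have h2 := le_abs_self lb
        have h3 := (abs_le.mp (hM a)).1
        rw [hC0def]
        linarith
      | succ n ih =>
        intro a
        have hcast : ((n + 1 : ℕ) : ℝ) = (n : ℝ) + 1 := by push_cast; ring
        rw [hcast, hstep (n : ℝ) (Nat.cast_nonneg n)]
        have hz : ∀ ℓ ∈ Lset, lb ≤ x (n : ℝ) ℓ := by
          intro ℓ hℓ
          have hℓ' : ∀ j, A ℓ j = 0 := by
            rw [hLset] at hℓ; simpa using (Finset.mem_filter.mp hℓ).2
          rw [hlead (n : ℝ) (Nat.cast_nonneg n) ℓ hℓ']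
          exact hlb ℓ hℓ'
        have := hlowstep (x (n : ℝ)) ((1 - δ) ^ n * C0) lb (by positivity) ih hz a
        calc lb - ((E 1).mulVec (x (n : ℝ))) a ≤ (1 - δ) * ((1 - δ) ^ n * C0) := this
          _ = (1 - δ) ^ (n + 1) * C0 := by ring
    have h1 : Tendsto (fun n : ℕ => (1 - δ) ^ n * C0 + x (n : ℝ) i) atTop (𝓝 (0 * C0 + c)) :=
      ((tendsto_pow_atTop_nhds_zero_of_lt_one hr0 hr1).mul_const C0).add hc
    have h2 : Tendsto (fun n : ℕ => (1 - δ) ^ n * C0 + x (n : ℝ) i) atTop (𝓝 c) := by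
      simpa using h1
    refine ge_of_tendsto h2 ?_
    filter_upwards with n
    linarith [hlown n i]
  · -- upper bound
    intro ub hub
    set C1 : ℝ := M + |ub| with hC1def
    have hC1 : 0 ≤ C1 := by positivity
    have hubn : ∀ n : ℕ, ∀ a, x (n : ℝ) a - ub ≤ (1 - δ) ^ n * C1 := by
      intro n
      induction n with
      | zero =>
        intro a
        simp only [Nat.cast_zero, pow_zero, one_mul]
        have h2 := neg_abs_le ub
        have h3 := (abs_le.mp (hM a)).2
        rw [hC1def]
        linarith
      | succ n ih =>
        intro a
        have hcast : ((n + 1 : ℕ) : ℝ) = (n : ℝ) + 1 := by push_cast; ring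
        rw [hcast, hstep (n : ℝ) (Nat.cast_nonneg n)]
        have hz : ∀ ℓ ∈ Lset, x (n : ℝ) ℓ ≤ ub := by
          intro ℓ hℓ
          have hℓ' : ∀ j, A ℓ j = 0 := by
            rw [hLset] at hℓ; simpa using (Finset.mem_filter.mp hℓ).2
          rw [hlead (n : ℝ) (Nat.cast_nonneg n) ℓ hℓ']
          exact hub ℓ hℓ'
        have := huppstep (x (n : ℝ)) ((1 - δ) ^ n * C1) ub (by positivity) ih hz a
        calc ((E 1).mulVec (x (n : ℝ))) a - ub ≤ (1 - δ) * ((1 - δ) ^ n * C1) := this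
          _ = (1 - δ) ^ (n + 1) * C1 := by ring
    have h1 : Tendsto (fun n : ℕ => x (n : ℝ) i - (1 - δ) ^ n * C1) atTop (𝓝 (c - 0 * C1)) :=
      hc.sub ((tendsto_pow_atTop_nhds_zero_of_lt_one hr0 hr1).mul_const C1)
    have h2 : Tendsto (fun n : ℕ => x (n : ℝ) i - (1 - δ) ^ n * C1) atTop (𝓝 c) := by
      simpa using h1
    refine le_of_tendsto h2 ?_
    filter_upwards with n
    linarith [hubn n i]
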